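/- Let G be a simple connected graph on n vertices with m edges, and suppose k ∈ ℝ is such that every eigenvalue λ of the normalized Laplacian 𝓛 other than the simple eigenvalue 0 satisfies k ≤ λ ≤ 2 − k (i.e., k ≤ λ_2(𝓛) ≤ ... ≤ λ_n(𝓛) ≤ 2 − k, where the eigenvalues are listed in nondecreasing order). Then for every vertex v_i of degree d_i, 𝓛E_G(v_i) ≤ 1 − k·(1 − d_i/(2m)). -/

import Mathlib

open Matrix BigOperators Finset

/-- The absolute value of a real matrix `B`, defined as `(B * Bᵀ)^(1/2)`. -/
noncomputable def matAbs {n : ℕ} (B : Matrix (Fin n) (Fin n) ℝ) : Matrix (Fin n) (Fin n) ℝ :=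
  let hA : (B * Bᵀ).PosSemidef := Matrix.conjTranspose_eq_transpose_of_trivial B ▸
    Matrix.posSemidef_self_mul_conjTranspose B
  (hA.1.eigenvectorUnitary : Matrix (Fin n) (Fin n) ℝ) *
    Matrix.diagonal ((↑) ∘ (Real.sqrt ·) ∘ hA.1.eigenvalues) *
    (star hA.1.eigenvectorUnitary : Matrix (Fin n) (Fin n) ℝ)

/-- The (adjacency) energy of the vertex `i` of the graph `G`: `|A|_{ii}`. -/
noncomputable def vertexEnergy {n : ℕ} (G : SimpleGraph (Fin n)) [DecidableRel G.Adj]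
    (i : Fin n) : ℝ :=
  matAbs (G.adjMatrix ℝ) i i

/-- The Laplacian energy of the vertex `i` of the graph `G`: `(|L - (2m/n) I|)_{ii}`. -/
noncomputable def vertexLapEnergy {n : ℕ} (G : SimpleGraph (Fin n)) [DecidableRel G.Adj]
    (i : Fin n) : ℝ :=
  matAbs (G.lapMatrix ℝ - ((2 * (G.edgeFinset.card : ℝ)) / n) • 1) i i

/-- The normalized Laplacian `𝓛 = I - D^{-1/2} A D^{-1/2}` of the graph `G`. -/
noncomputable def normLap {n : ℕ} (G : SimpleGraph (Fin n)) [DecidableRel G.Adj] :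
    Matrix (Fin n) (Fin n) ℝ :=
  1 - Matrix.diagonal (fun i => (Real.sqrt (G.degree i))⁻¹) * G.adjMatrix ℝ *
      Matrix.diagonal (fun i => (Real.sqrt (G.degree i))⁻¹)

/-- The normalized Laplacian energy of the vertex `i` of the graph `G`: `(|𝓛 - I|)_{ii}`. -/
noncomputable def vertexNormLapEnergy {n : ℕ} (G : SimpleGraph (Fin n)) [DecidableRel G.Adj]
    (i : Fin n) : ℝ :=
  matAbs (normLap G - 1) i i

/- ### Auxiliary lemmas -/

lemma matAbs_eq {n : ℕ} {B S : Matrix (Fin n) (Fin n) ℝ} (hS : S.PosSemidef)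
    (h : S ^ 2 = B * Bᵀ) : matAbs B = S := by
  open scoped MatrixOrder in
  have hA : (B * Bᵀ).PosSemidef := Matrix.conjTranspose_eq_transpose_of_trivial B ▸
    Matrix.posSemidef_self_mul_conjTranspose B
  have e1 : matAbs B = hA.1.cfc Real.sqrt := by
    rw [Matrix.IsHermitian.cfc, Unitary.conjStarAlgAut_apply]; rfl
  rw [e1, ← Matrix.IsHermitian.cfc_eq, ← cfcₙ_eq_cfc (hf0 := by simp),
    ← CFC.sqrt_eq_real_sqrt _ hA.nonneg]
  exact CFC.sqrt_unique (by rw [← pow_two]; exact h) hS.nonneg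

lemma mem_spectrum_of_mulVec {n : ℕ} {A : Matrix (Fin n) (Fin n) ℝ} {μ : ℝ} {v : Fin n → ℝ}
    (hv : v ≠ 0) (h : A *ᵥ v = μ • v) : μ ∈ spectrum ℝ A := by
  rw [spectrum.mem_iff]
  intro hu
  have h0 : (algebraMap ℝ (Matrix (Fin n) (Fin n) ℝ) μ - A) *ᵥ v = 0 := by
    rw [Matrix.sub_mulVec, h, Algebra.algebraMap_eq_smul_one, Matrix.smul_mulVec,
      Matrix.one_mulVec, sub_self]
  exact hv ((Matrix.mulVec_injective_iff_isUnit.2 hu).eq_iff.1 (by simpa using h0))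

section Spectral

variable {n : ℕ} {M : Matrix (Fin n) (Fin n) ℝ} (hM : M.IsHermitian)

lemma spectral_real :
    M = (hM.eigenvectorUnitary : Matrix (Fin n) (Fin n) ℝ) * Matrix.diagonal hM.eigenvalues
      * (hM.eigenvectorUnitary : Matrix (Fin n) (Fin n) ℝ)ᴴ := by
  have := hM.spectral_theorem
  rw [Unitary.conjStarAlgAut_apply, Matrix.star_eq_conjTranspose] at this
  exact this

lemma matAbs_of_hermitian :
    matAbs M = (hM.eigenvectorUnitary : Matrix (Fin n) (Fin n) ℝ)
      * Matrix.diagonal (fun j => |hM.eigenvalues j|)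
      * (hM.eigenvectorUnitary : Matrix (Fin n) (Fin n) ℝ)ᴴ := by
  set U : Matrix (Fin n) (Fin n) ℝ := (hM.eigenvectorUnitary : Matrix (Fin n) (Fin n) ℝ)
    with hUdef
  have hU1 : Uᴴ * U = 1 := by
    rw [← Matrix.star_eq_conjTranspose]
    exact_mod_cast Unitary.coe_star_mul_self hM.eigenvectorUnitary
  apply matAbs_eq
  · exact (Matrix.PosSemidef.diagonal (fun j => abs_nonneg _)).mul_mul_conjTranspose_same U
  · have hMT : Mᵀ = M := by
      rw [← Matrix.conjTranspose_eq_transpose_of_trivial]; exact hM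
    have hdd : Matrix.diagonal (fun j => |hM.eigenvalues j|)
        * Matrix.diagonal (fun j => |hM.eigenvalues j|)
        = Matrix.diagonal hM.eigenvalues * Matrix.diagonal hM.eigenvalues := by
      rw [Matrix.diagonal_mul_diagonal, Matrix.diagonal_mul_diagonal]
      have habs : (fun i => |hM.eigenvalues i| * |hM.eigenvalues i|)
          = fun i => hM.eigenvalues i * hM.eigenvalues i :=
        funext fun j => abs_mul_abs_self (hM.eigenvalues j)
      rw [habs]
    rw [hMT, pow_two]
    conv_rhs => rw [spectral_real hM]
    rw [← hUdef]
    simp only [Matrix.mul_assoc]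
    rw [← Matrix.mul_assoc Uᴴ U, hU1, Matrix.one_mul,
      ← Matrix.mul_assoc (Matrix.diagonal (fun j => |hM.eigenvalues j|)),
      ← Matrix.mul_assoc (Matrix.diagonal hM.eigenvalues), hdd]
    rw [Matrix.mul_assoc (Matrix.diagonal hM.eigenvalues) (Matrix.diagonal hM.eigenvalues),
      Matrix.mul_assoc (Matrix.diagonal hM.eigenvalues) Uᴴ, ← Matrix.mul_assoc Uᴴ U, hU1,
      Matrix.one_mul]

lemma exists_eig_eq {t : ℝ} (ht : t ∈ spectrum ℝ M) : ∃ j, hM.eigenvalues j = t := by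
  by_contra hcon
  push_neg at hcon
  rw [spectrum.mem_iff] at ht
  apply ht
  set U : Matrix (Fin n) (Fin n) ℝ := (hM.eigenvectorUnitary : Matrix (Fin n) (Fin n) ℝ)
    with hUdef
  have hUU : U * Uᴴ = 1 := by
    rw [← Matrix.star_eq_conjTranspose]
    exact_mod_cast Unitary.coe_mul_star_self hM.eigenvectorUnitary
  have h1 : algebraMap ℝ (Matrix (Fin n) (Fin n) ℝ) t - M
      = U * Matrix.diagonal (fun j => t - hM.eigenvalues j) * Uᴴ := by
    have halg : algebraMap ℝ (Matrix (Fin n) (Fin n) ℝ) t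
        = U * Matrix.diagonal (fun _ => t) * Uᴴ := by
      rw [Algebra.algebraMap_eq_smul_one, Matrix.smul_one_eq_diagonal,
        ← Matrix.smul_one_eq_diagonal, Matrix.mul_smul, Matrix.smul_mul, Matrix.mul_one, hUU]
    conv_lhs => rw [halg, spectral_real hM, ← hUdef]
    rw [← Matrix.sub_mul, ← Matrix.mul_sub, Matrix.diagonal_sub]
  rw [h1, Matrix.isUnit_iff_isUnit_det, Matrix.det_mul, Matrix.det_mul, Matrix.det_diagonal,
    isUnit_iff_ne_zero]
  have hdU : U.det * Uᴴ.det = 1 := by rw [← Matrix.det_mul, hUU, Matrix.det_one]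
  have hprod : (∏ j, (t - hM.eigenvalues j)) ≠ 0 :=
    Finset.prod_ne_zero_iff.2 fun j _ => sub_ne_zero.2 fun h => hcon j h.symm
  have hU0 : U.det ≠ 0 := fun h => by simp [h] at hdU
  have hUH0 : Uᴴ.det ≠ 0 := fun h => hU0 (by rwa [Matrix.det_conjTranspose, star_trivial] at h)
  intro h0
  rcases mul_eq_zero.1 h0 with h2 | h2
  · rcases mul_eq_zero.1 h2 with h3 | h3
    · exact hU0 h3
    · exact hprod h3
  · exact hUH0 h2

lemma conj_diag_apply (U : Matrix (Fin n) (Fin n) ℝ) (v : Fin n → ℝ) (i : Fin n) :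
    (U * Matrix.diagonal v * Uᴴ) i i = ∑ j, v j * (U i j)^2 := by
  rw [Matrix.mul_apply]
  refine Finset.sum_congr rfl fun j _ => ?_
  rw [Matrix.mul_diagonal, Matrix.conjTranspose_apply, star_trivial]; ring

lemma row_sum_one {U : Matrix (Fin n) (Fin n) ℝ} (hU : U * Uᴴ = 1) (i : Fin n) :
    ∑ j, (U i j)^2 = 1 := by
  have h := congrFun (congrFun hU i) i
  simp only [Matrix.mul_apply, Matrix.conjTranspose_apply, star_trivial, Matrix.one_apply_eq]
    at h
  rw [← h]
  exact Finset.sum_congr rfl fun j _ => pow_two _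

lemma eigBasis_ortho (j l : Fin n) :
    ∑ i, hM.eigenvectorBasis j i * hM.eigenvectorBasis l i = if j = l then 1 else 0 := by
  have h := orthonormal_iff_ite.mp hM.eigenvectorBasis.orthonormal j l
  rw [PiLp.inner_apply] at h
  simpa [RCLike.inner_apply, mul_comm] using h

lemma eigBasis_ne_zero (j : Fin n) : (⇑(hM.eigenvectorBasis j) : Fin n → ℝ) ≠ 0 := by
  intro h
  have h1 := eigBasis_ortho hM j j
  rw [if_pos rfl] at h1
  have h2 : ∀ i, hM.eigenvectorBasis j i = (0:ℝ) := fun i => congrFun h i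
  simp only [h2, mul_zero, Finset.sum_const_zero] at h1
  norm_num at h1

end Spectral

section Graph

variable {n : ℕ} (G : SimpleGraph (Fin n)) [DecidableRel G.Adj]

lemma normLap_sub_one : normLap G - 1 =
    -(Matrix.diagonal (fun i => (Real.sqrt (G.degree i))⁻¹) * G.adjMatrix ℝ *
      Matrix.diagonal (fun i => (Real.sqrt (G.degree i))⁻¹)) := by
  rw [normLap, sub_sub_cancel_left]

lemma isHermitian_M : (normLap G - 1).IsHermitian := by
  rw [normLap_sub_one, Matrix.IsHermitian, Matrix.conjTranspose_eq_transpose_of_trivial]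
  simp [Matrix.transpose_mul, Matrix.mul_assoc]

lemma deg_pos (hconn : G.Connected) (hn : 1 < n) (i : Fin n) : 0 < G.degree i := by
  rw [G.degree_pos_iff_exists_adj]
  obtain ⟨j, hj⟩ : ∃ j : Fin n, j ≠ i := by
    refine ⟨if i = ⟨0, by omega⟩ then ⟨1, hn⟩ else ⟨0, by omega⟩, ?_⟩
    split
    · simp_all [Fin.ext_iff]
    · simp_all [Fin.ext_iff]
      omega
  obtain ⟨p⟩ := hconn i j
  cases p with
  | nil => exact absurd rfl hj.symm
  | cons h _ => exact ⟨_, h⟩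

lemma mulVec_w (hconn : G.Connected) (hn : 1 < n) :
    normLap G *ᵥ (fun i => Real.sqrt (G.degree i)) = 0 := by
  have hd : ∀ i, (0:ℝ) < Real.sqrt (G.degree i) := fun i =>
    Real.sqrt_pos.2 (by exact_mod_cast deg_pos G hconn hn i)
  have h1 : (Matrix.diagonal (fun i => (Real.sqrt (G.degree i))⁻¹)) *ᵥ
      (fun i => Real.sqrt (G.degree i)) = Function.const _ (1:ℝ) := by
    funext j
    rw [Matrix.mulVec_diagonal]
    exact inv_mul_cancel₀ (hd j).ne'
  funext i
  simp only [normLap, Matrix.sub_mulVec, Matrix.one_mulVec, ← Matrix.mulVec_mulVec, h1,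
    Pi.sub_apply, Pi.zero_apply]
  rw [Matrix.mulVec_diagonal, G.adjMatrix_mulVec_const_apply]
  rw [mul_one, inv_mul_eq_div]
  rw [show ((G.degree i : ℝ)) = Real.sqrt (G.degree i) * Real.sqrt (G.degree i) from
    (Real.mul_self_sqrt (by positivity)).symm]
  field_simp
  rw [Real.sqrt_sq (hd i).le, sub_self, zero_div]

lemma normLap_eq_conj (hconn : G.Connected) (hn : 1 < n) :
    normLap G = Matrix.diagonal (fun i => (Real.sqrt (G.degree i))⁻¹) * G.lapMatrix ℝ *
      Matrix.diagonal (fun i => (Real.sqrt (G.degree i))⁻¹) := by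
  have hd : ∀ i, (0:ℝ) < Real.sqrt (G.degree i) := fun i =>
    Real.sqrt_pos.2 (by exact_mod_cast deg_pos G hconn hn i)
  rw [SimpleGraph.lapMatrix, mul_sub, sub_mul, normLap, SimpleGraph.degMatrix]
  congr 1
  rw [Matrix.diagonal_mul_diagonal, Matrix.diagonal_mul_diagonal]
  have hf : (fun i => (Real.sqrt (G.degree i))⁻¹ * (G.degree i : ℝ) * (Real.sqrt (G.degree i))⁻¹)
      = fun _ => (1:ℝ) := by
    funext i
    have h2 : Real.sqrt (G.degree i) * Real.sqrt (G.degree i) = (G.degree i : ℝ) :=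
      Real.mul_self_sqrt (by positivity)
    rw [← h2]
    field_simp
    rw [Real.sqrt_sq (hd i).le]; exact div_self (pow_pos (hd i) 2).ne'
  rw [hf, Matrix.diagonal_one]

lemma ker_normLap (hconn : G.Connected) (hn : 1 < n) {x : Fin n → ℝ}
    (hx : normLap G *ᵥ x = 0) : ∃ c : ℝ, x = c • (fun i => Real.sqrt (G.degree i)) := by
  have hd : ∀ i, (0:ℝ) < Real.sqrt (G.degree i) := fun i =>
    Real.sqrt_pos.2 (by exact_mod_cast deg_pos G hconn hn i)
  set y : Fin n → ℝ := fun i => (Real.sqrt (G.degree i))⁻¹ * x i with hy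
  have hLy : G.lapMatrix ℝ *ᵥ y = 0 := by
    have hyd : y = Matrix.diagonal (fun i => (Real.sqrt (G.degree i))⁻¹) *ᵥ x := by
      funext i; rw [Matrix.mulVec_diagonal]
    have h0 : Matrix.diagonal (fun i => (Real.sqrt (G.degree i))⁻¹) *ᵥ
        (G.lapMatrix ℝ *ᵥ y) = 0 := by
      rw [hyd, Matrix.mulVec_mulVec, Matrix.mulVec_mulVec,
        ← normLap_eq_conj G hconn hn, hx]
    funext i
    have := congrFun h0 i
    rw [Matrix.mulVec_diagonal] at this
    simpa [inv_eq_zero, (hd i).ne'] using this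
  have hreach : ∀ i j : Fin n, y i = y j := by
    intro i j
    have := (G.lapMatrix_mulVec_eq_zero_iff_forall_reachable (x := y)).1
      hLy
    exact this i j (hconn i j)
  obtain ⟨i0⟩ : Nonempty (Fin n) := ⟨⟨0, by omega⟩⟩
  refine ⟨y i0, funext fun i => ?_⟩
  have hyi : y i = y i0 := hreach i i0
  have : x i = Real.sqrt (G.degree i) * y i := by
    rw [hy]; rw [← mul_assoc, mul_inv_cancel₀ (hd i).ne', one_mul]
  rw [this, hyi]; simp [mul_comm]

end Graph

theorem stmt18 {n : ℕ} (G : SimpleGraph (Fin n)) [DecidableRel G.Adj]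
    (hconn : G.Connected) (k : ℝ)
    (hk : ∀ μ ∈ spectrum ℝ (normLap G), μ ≠ 0 → k ≤ μ ∧ μ ≤ 2 - k) (i : Fin n) :
    vertexNormLapEnergy G i ≤
      1 - k * (1 - (G.degree i : ℝ) / (2 * (G.edgeFinset.card : ℝ))) := by
  by_cases hn : 1 < n
  case neg =>
    -- degenerate case `n = 1`
    have hn1 : n = 1 := by have := i.isLt; omega
    subst hn1
    have hnoadj : ∀ a b : Fin 1, ¬ G.Adj a b := by
      intro a b h
      exact G.irrefl (Subsingleton.elim a b ▸ h)
    have hA0 : G.adjMatrix ℝ = 0 := by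
      ext a b
      simp [hnoadj a b]
    have hN1 : normLap G = 1 := by
      rw [normLap, hA0]
      simp
    have hdeg : G.degree i = 0 := by
      by_contra h
      obtain ⟨w, hw⟩ := G.degree_pos_iff_exists_adj i |>.1 (Nat.pos_of_ne_zero h)
      exact hnoadj i w hw
    have hLHS : vertexNormLapEnergy G i = 0 := by
      rw [vertexNormLapEnergy, hN1, sub_self,
        matAbs_eq Matrix.PosSemidef.zero (by simp)]
      rfl
    have hk1 : k ≤ 1 := by
      have h1 : (1:ℝ) ∈ spectrum ℝ (normLap G) := by
        apply mem_spectrum_of_mulVec (v := fun _ => (1:ℝ))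
        · intro h; simpa using congrFun h i
        · rw [hN1, Matrix.one_mulVec, one_smul]
      have := (hk 1 h1 one_ne_zero).2
      linarith
    rw [hLHS, hdeg]
    push_cast
    rw [zero_div, sub_zero, mul_one]
    linarith
  case pos =>
    set w : Fin n → ℝ := fun j => Real.sqrt (G.degree j) with hwdef
    have hdpos : ∀ j, (0:ℝ) < w j := fun j =>
      Real.sqrt_pos.2 (by exact_mod_cast deg_pos G hconn hn j)
    have hw2 : ∀ j, w j ^ 2 = (G.degree j : ℝ) := fun j =>
      Real.sq_sqrt (by positivity)
    set m : ℝ := (G.edgeFinset.card : ℝ) with hmdef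
    have hsumw : ∑ j, w j ^ 2 = 2 * m := by
      simp only [hw2, hmdef]
      exact_mod_cast congrArg (Nat.cast (R := ℝ)) G.sum_degrees_eq_twice_card_edges
    have hmpos : 0 < 2 * m := by
      rw [← hsumw]
      exact Finset.sum_pos (fun j _ => pow_pos (hdpos j) 2) ⟨i, Finset.mem_univ i⟩
    set M : Matrix (Fin n) (Fin n) ℝ := normLap G - 1 with hMdef
    have hM : M.IsHermitian := isHermitian_M G
    set U : Matrix (Fin n) (Fin n) ℝ := (hM.eigenvectorUnitary : Matrix (Fin n) (Fin n) ℝ)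
      with hUdef
    set μ : Fin n → ℝ := hM.eigenvalues with hmudef
    have hUU : U * Uᴴ = 1 := by
      rw [hUdef, ← Matrix.star_eq_conjTranspose]
      exact_mod_cast Unitary.coe_mul_star_self hM.eigenvectorUnitary
    have hNL : normLap G = M + 1 := by rw [hMdef, sub_add_cancel]
    -- eigenvector facts
    have hUB : ∀ a b : Fin n, U a b = hM.eigenvectorBasis b a := fun a b =>
      hM.eigenvectorUnitary_apply a b
    have hmv : ∀ j, normLap G *ᵥ ⇑(hM.eigenvectorBasis j)
        = (μ j + 1) • ⇑(hM.eigenvectorBasis j) := by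
      intro j
      rw [hNL, Matrix.add_mulVec, Matrix.one_mulVec, hM.mulVec_eigenvectorBasis, add_smul,
        one_smul]
    have hspecN : ∀ j, μ j + 1 ∈ spectrum ℝ (normLap G) :=
      fun j => mem_spectrum_of_mulVec (eigBasis_ne_zero hM j) (hmv j)
    -- `-1` is an eigenvalue of `M`, with eigenvector `w`
    have hw0 : w ≠ 0 := fun h => absurd (congrFun h i) (hdpos i).ne'
    have hMw : M *ᵥ w = (-1 : ℝ) • w := by
      rw [hMdef, Matrix.sub_mulVec, mulVec_w G hconn hn, Matrix.one_mulVec, zero_sub,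
        neg_smul, one_smul]
    obtain ⟨j0, hj0⟩ := exists_eig_eq hM (mem_spectrum_of_mulVec hw0 hMw)
    -- the eigenvector for `-1` is proportional to `w`
    have hker : ∀ j, μ j = -1 → ∃ c : ℝ, c ≠ 0 ∧ ⇑(hM.eigenvectorBasis j) = c • w := by
      intro j hj
      have h0 : normLap G *ᵥ ⇑(hM.eigenvectorBasis j) = 0 := by
        rw [hmv j, hj]
        simp
      obtain ⟨c, hc⟩ := ker_normLap G hconn hn h0
      refine ⟨c, fun h => eigBasis_ne_zero hM j (by rw [hc, h, zero_smul]), hc⟩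
    obtain ⟨c0, hc0ne, hc0⟩ := hker j0 hj0
    -- uniqueness of the `-1` eigenvalue index
    have huniq : ∀ j, j ≠ j0 → μ j ≠ -1 := by
      intro j hj hjeq
      obtain ⟨c, hcne, hc⟩ := hker j hjeq
      have horth := eigBasis_ortho hM j j0
      rw [if_neg hj] at horth
      have : ∑ a, hM.eigenvectorBasis j a * hM.eigenvectorBasis j0 a
          = c * c0 * (2 * m) := by
        rw [← hsumw, Finset.mul_sum]
        refine Finset.sum_congr rfl fun a _ => ?_
        have h1 : hM.eigenvectorBasis j a = c * w a := congrFun hc a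
        have h2 : hM.eigenvectorBasis j0 a = c0 * w a := congrFun hc0 a
        rw [h1, h2]; ring
      rw [this] at horth
      rcases mul_eq_zero.1 horth with h | h
      · rcases mul_eq_zero.1 h with h' | h'
        · exact hcne h'
        · exact hc0ne h'
      · exact hmpos.ne' h
    -- normalization: `c0 ^ 2 * (2 m) = 1`
    have hnorm : c0 ^ 2 * (2 * m) = 1 := by
      have h1 := eigBasis_ortho hM j0 j0
      rw [if_pos rfl] at h1
      rw [← h1, ← hsumw, Finset.mul_sum]
      refine Finset.sum_congr rfl fun a _ => ?_
      have h2 : hM.eigenvectorBasis j0 a = c0 * w a := congrFun hc0 a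
      rw [h2]; ring
    -- key: the weight of vertex `i` on the `-1`-eigenvector
    have hkey : (U i j0) ^ 2 = (G.degree i : ℝ) / (2 * m) := by
      have h1 : hM.eigenvectorBasis j0 i = c0 * w i := congrFun hc0 i
      rw [hUB i j0, h1, mul_pow, hw2 i, eq_div_iff hmpos.ne']
      linear_combination (G.degree i : ℝ) * hnorm
    -- eigenvalue bounds away from `j0`
    have hbound : ∀ j, j ≠ j0 → |μ j| ≤ 1 - k := by
      intro j hj
      have hne : μ j + 1 ≠ 0 := fun h => huniq j hj (by linarith)
      obtain ⟨hl, hr⟩ := hk (μ j + 1) (hspecN j) hne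
      rw [abs_le]
      constructor <;> linarith
    -- the energy as a spectral sum
    have hdiag : vertexNormLapEnergy G i = ∑ j, |μ j| * (U i j) ^ 2 := by
      rw [vertexNormLapEnergy, ← hMdef, matAbs_of_hermitian hM, ← hUdef, ← hmudef,
        conj_diag_apply]
    have hsum1 : ∑ j, (U i j) ^ 2 = 1 := row_sum_one hUU i
    -- put it together
    have hj0' : μ j0 = -1 := hj0
    have hsplit : ∑ j, |μ j| * (U i j) ^ 2
        = ∑ j ∈ Finset.univ.erase j0, |μ j| * (U i j) ^ 2 + |μ j0| * (U i j0) ^ 2 :=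
      (Finset.sum_erase_add _ _ (Finset.mem_univ j0)).symm
    have hT' : ∑ j ∈ Finset.univ.erase j0, (U i j) ^ 2 + (U i j0) ^ 2 = 1 := by
      rw [Finset.sum_erase_add _ _ (Finset.mem_univ j0)]
      exact hsum1
    have hT : ∑ j ∈ Finset.univ.erase j0, (U i j) ^ 2 = 1 - (G.degree i : ℝ) / (2 * m) := by
      rw [hkey] at hT'
      linarith
    have hstep : ∑ j ∈ Finset.univ.erase j0, |μ j| * (U i j) ^ 2
        ≤ (1 - k) * (1 - (G.degree i : ℝ) / (2 * m)) := by
      rw [← hT, Finset.mul_sum]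
      refine Finset.sum_le_sum fun j hj => ?_
      exact mul_le_mul_of_nonneg_right (hbound j (Finset.ne_of_mem_erase hj)) (sq_nonneg _)
    have hj0term : |μ j0| * (U i j0) ^ 2 = (G.degree i : ℝ) / (2 * m) := by
      rw [hj0', hkey]
      norm_num
    have hring : (1 - k) * (1 - (G.degree i : ℝ) / (2 * m)) + (G.degree i : ℝ) / (2 * m)
        = 1 - k * (1 - (G.degree i : ℝ) / (2 * m)) := by ring
    rw [hdiag, hsplit, hj0term]
    linarith
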